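/- Let A, B be n×n Hermitian matrices, H = A + B, Q₄ = A⁴ + 4A³B + 6A²B² + 4AB³ + B⁴. Then the eigenvalue vector of H⁴ is weakly majorized by the eigenvalue vector of Re Q₄ = (Q₄ + Q₄*)/2: for every r, the sum of the r largest eigenvalues of H⁴ is at most the sum of the r largest eigenvalues of Re Q₄. -/
import Mathlib


open Matrix BigOperators
open scoped ComplexOrder

/-- `descSort f` lists the values of `f` in nonincreasing order:
`descSort f j` is the `j`-th largest value of `f`. -/
noncomputable def descSort {n : ℕ} (f : Fin n → ℝ) : Fin n → ℝ :=
  f ∘ Tuple.sort (fun i => -(f i))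

/-- The singular values of a complex square matrix, in nonincreasing order. -/
noncomputable def singVals {n : ℕ} (Y : Matrix (Fin n) (Fin n) ℂ) : Fin n → ℝ :=
  descSort (fun i => Real.sqrt ((Matrix.posSemidef_conjTranspose_mul_self Y).1.eigenvalues i))

/-- The orthogonal (spectral) projection onto the span of the eigenvectors of `F`
indexed by the set `s`, in an orthonormal eigenbasis of the Hermitian matrix `F`. -/
noncomputable def specProj {n : ℕ} {F : Matrix (Fin n) (Fin n) ℂ} (hF : F.IsHermitian)
    (s : Finset (Fin n)) : Matrix (Fin n) (Fin n) ℂ :=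
  (hF.eigenvectorUnitary : Matrix (Fin n) (Fin n) ℂ) *
    Matrix.diagonal (fun i => if i ∈ s then (1:ℂ) else 0) *
    (hF.eigenvectorUnitary : Matrix (Fin n) (Fin n) ℂ)ᴴ

/-! ### Auxiliary combinatorial lemmas -/

lemma card_filt {n : ℕ} (r : ℕ) (hr : r ≤ n) :
    (Finset.univ.filter (fun j : Fin n => (j : ℕ) < r)).card = r := by
  have : (Finset.univ.filter (fun j : Fin n => (j : ℕ) < r))
      = Finset.map (Fin.castLEEmb hr) Finset.univ := by
    ext j
    simp only [Finset.mem_filter, Finset.mem_univ, true_and, Finset.mem_map]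
    constructor
    · intro h; exact ⟨⟨j, h⟩, by simp [Fin.castLEEmb, Fin.castLE]⟩
    · rintro ⟨i, rfl⟩; simp [Fin.castLEEmb, Fin.castLE]
  rw [this, Finset.card_map, Finset.card_univ, Fintype.card_fin]

lemma antitone_descSort {n : ℕ} (f : Fin n → ℝ) : Antitone (descSort f) := by
  have h := Tuple.monotone_sort (fun i => -(f i))
  intro a b hab
  have := h hab
  simp only [Function.comp_apply] at this
  simpa [descSort] using this

lemma sum_chi {n : ℕ} (r : ℕ) (hr : r ≤ n) :
    ∑ i : Fin n, (if (i : ℕ) < r then (1:ℝ) else 0) = r := by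
  rw [Finset.sum_boole, card_filt r hr]

/-- Abel-type bound: a `[0,1]`-weighted sum with total weight `r` against an antitone
sequence is at most the sum of the first `r` terms. -/
lemma sum_mul_le_partial {n : ℕ} (g c : Fin n → ℝ) (hg : Antitone g)
    (hc0 : ∀ i, 0 ≤ c i) (hc1 : ∀ i, c i ≤ 1) (r : ℕ) (hr : r ≤ n)
    (hsum : ∑ i, c i = r) :
    ∑ i, g i * c i ≤ ∑ j ∈ Finset.univ.filter (fun j : Fin n => (j:ℕ) < r), g j := by
  rcases n with _ | m
  · simp
  set χ : Fin (m+1) → ℝ := fun i => if (i : ℕ) < r then (1:ℝ) else 0 with hχ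
  set θ : ℝ := g ⟨min r m, by omega⟩ with hθ
  have hθ1 : ∀ i : Fin (m+1), (i:ℕ) < r → θ ≤ g i := by
    intro i hi
    exact hg (by simp [Fin.le_def]; omega)
  have hθ2 : ∀ i : Fin (m+1), ¬ (i:ℕ) < r → g i ≤ θ := by
    intro i hi
    exact hg (by simp [Fin.le_def]; omega)
  have key : ∑ i, (g i - θ) * (c i - χ i) ≤ 0 := by
    apply Finset.sum_nonpos
    intro i _
    by_cases h : (i:ℕ) < r
    · have : χ i = 1 := by simp [hχ, h]
      rw [this]
      exact mul_nonpos_of_nonneg_of_nonpos (by linarith [hθ1 i h]) (by linarith [hc1 i])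
    · have : χ i = 0 := by simp [hχ, h]
      rw [this]
      exact mul_nonpos_of_nonpos_of_nonneg (by linarith [hθ2 i h]) (by linarith [hc0 i])
  have e1 : ∑ i, g i * c i
      = (∑ i, (g i - θ) * (c i - χ i)) + θ * (∑ i, c i) - θ * (∑ i, χ i)
        + ∑ i, g i * χ i := by
    rw [Finset.mul_sum, Finset.mul_sum, ← Finset.sum_add_distrib, ← Finset.sum_sub_distrib,
      ← Finset.sum_add_distrib]
    exact Finset.sum_congr rfl fun i _ => by ring
  have e2 : ∑ i, g i * χ i = ∑ j ∈ Finset.univ.filter (fun j : Fin (m+1) => (j:ℕ) < r), g j := by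
    rw [Finset.sum_filter]
    exact Finset.sum_congr rfl fun i _ => by by_cases h : (i:ℕ) < r <;> simp [hχ, h]
  rw [e1, hsum, sum_chi r hr, e2]
  linarith

/-- The partial sums of `descSort f` are attained on a "top" set. -/
lemma descSort_partial_sum {n : ℕ} (f : Fin n → ℝ) (r : ℕ) (hr : r ≤ n) :
    ∃ t : Finset (Fin n), t.card = r ∧ (∀ i ∈ t, ∀ k, k ∉ t → f k ≤ f i) ∧
      ∑ j ∈ Finset.univ.filter (fun j : Fin n => (j:ℕ) < r), descSort f j = ∑ i ∈ t, f i := by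
  set σ := Tuple.sort (fun i => -(f i)) with hσ
  refine ⟨(Finset.univ.filter (fun j : Fin n => (j:ℕ) < r)).image σ, ?_, ?_, ?_⟩
  · rw [Finset.card_image_of_injective _ σ.injective, card_filt r hr]
  · rintro i hi k hk
    simp only [Finset.mem_image, Finset.mem_filter, Finset.mem_univ, true_and] at hi hk
    obtain ⟨j, hj, rfl⟩ := hi
    have hk' : ¬ ((σ.symm k : ℕ) < r) := fun h => hk ⟨σ.symm k, h, σ.apply_symm_apply k⟩
    have h2 : descSort f (σ.symm k) ≤ descSort f j :=
      antitone_descSort f (by rw [Fin.le_def]; omega)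
    calc f k = descSort f (σ.symm k) := by
            simp [descSort, hσ]
      _ ≤ descSort f j := h2
  · rw [Finset.sum_image (fun a _ b _ h => σ.injective h)]
    rfl

/-! ### Unitary and spectral helpers -/

section unitaryHelpers
variable {n : ℕ} {F : Matrix (Fin n) (Fin n) ℂ}

lemma eigU_conjT_mul (hF : F.IsHermitian) :
    (hF.eigenvectorUnitary : Matrix (Fin n) (Fin n) ℂ)ᴴ *
      (hF.eigenvectorUnitary : Matrix (Fin n) (Fin n) ℂ) = 1 := by
  rw [← star_eq_conjTranspose]
  exact Unitary.coe_star_mul_self hF.eigenvectorUnitary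

lemma eigU_mul_conjT (hF : F.IsHermitian) :
    (hF.eigenvectorUnitary : Matrix (Fin n) (Fin n) ℂ) *
      (hF.eigenvectorUnitary : Matrix (Fin n) (Fin n) ℂ)ᴴ = 1 := by
  rw [← star_eq_conjTranspose]
  exact Unitary.coe_mul_star_self hF.eigenvectorUnitary

lemma spectral (hF : F.IsHermitian) :
    F = (hF.eigenvectorUnitary : Matrix (Fin n) (Fin n) ℂ) *
      diagonal (fun i => ((hF.eigenvalues i : ℝ) : ℂ)) *
      (hF.eigenvectorUnitary : Matrix (Fin n) (Fin n) ℂ)ᴴ := by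
  rw [← star_eq_conjTranspose]
  exact hF.spectral_theorem

lemma specProj_herm (hF : F.IsHermitian) (s : Finset (Fin n)) :
    (specProj hF s)ᴴ = specProj hF s := by
  unfold specProj
  rw [conjTranspose_mul, conjTranspose_mul, conjTranspose_conjTranspose,
    diagonal_conjTranspose]
  have : star (fun i => if i ∈ s then (1:ℂ) else 0) = (fun i => if i ∈ s then (1:ℂ) else 0) := by
    funext i
    simp only [Pi.star_apply]
    split <;> simp
  rw [this, Matrix.mul_assoc]

lemma specProj_idem (hF : F.IsHermitian) (s : Finset (Fin n)) :
    specProj hF s * specProj hF s = specProj hF s := by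
  unfold specProj
  set V := (hF.eigenvectorUnitary : Matrix (Fin n) (Fin n) ℂ)
  set E : Matrix (Fin n) (Fin n) ℂ := diagonal (fun i => if i ∈ s then (1:ℂ) else 0) with hE
  have hEE : E * E = E := by
    rw [hE, diagonal_mul_diagonal]
    apply congrArg diagonal
    funext i
    split <;> simp
  calc V * E * Vᴴ * (V * E * Vᴴ) = V * (E * (Vᴴ * V) * E) * Vᴴ := by noncomm_ring
    _ = V * E * Vᴴ := by rw [eigU_conjT_mul hF, mul_one, hEE]

lemma specProj_trace (hF : F.IsHermitian) (s : Finset (Fin n)) :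
    (specProj hF s).trace = (s.card : ℂ) := by
  unfold specProj
  rw [Matrix.trace_mul_comm]
  rw [show (hF.eigenvectorUnitary : Matrix (Fin n) (Fin n) ℂ)ᴴ *
      ((hF.eigenvectorUnitary : Matrix (Fin n) (Fin n) ℂ) *
        diagonal (fun i => if i ∈ s then (1:ℂ) else 0))
      = ((hF.eigenvectorUnitary : Matrix (Fin n) (Fin n) ℂ)ᴴ *
        (hF.eigenvectorUnitary : Matrix (Fin n) (Fin n) ℂ)) *
        diagonal (fun i => if i ∈ s then (1:ℂ) else 0) by noncomm_ring,
    eigU_conjT_mul hF, one_mul, Matrix.trace_diagonal]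
  rw [Finset.sum_ite_mem]
  simp

lemma trace_specProj_self (hF : F.IsHermitian) (s : Finset (Fin n)) :
    (Matrix.trace (specProj hF s * F)).re = ∑ i ∈ s, hF.eigenvalues i := by
  set V := (hF.eigenvectorUnitary : Matrix (Fin n) (Fin n) ℂ) with hV
  set E : Matrix (Fin n) (Fin n) ℂ := diagonal (fun i => if i ∈ s then (1:ℂ) else 0) with hE
  have h1 : specProj hF s * F
      = V * (E * diagonal (fun i => ((hF.eigenvalues i : ℝ) : ℂ))) * Vᴴ := by
    have hs := spectral hF
    calc specProj hF s * F
        = V * E * Vᴴ * (V * diagonal (fun i => ((hF.eigenvalues i : ℝ) : ℂ)) * Vᴴ) := by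
          rw [← hs]; rfl
      _ = V * E * Vᴴ * (V * diagonal (fun i => ((hF.eigenvalues i : ℝ) : ℂ)) * Vᴴ)
        := rfl
      _ = V * (E * (Vᴴ * V) * diagonal (fun i => ((hF.eigenvalues i : ℝ) : ℂ))) * Vᴴ := by
          noncomm_ring
      _ = _ := by rw [eigU_conjT_mul hF, mul_one]
  rw [h1, Matrix.trace_mul_comm, show Vᴴ * (V * (E * diagonal (fun i => ((hF.eigenvalues i : ℝ) : ℂ))))
      = (Vᴴ * V) * (E * diagonal (fun i => ((hF.eigenvalues i : ℝ) : ℂ))) by noncomm_ring,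
    eigU_conjT_mul hF, one_mul, hE, diagonal_mul_diagonal, Matrix.trace_diagonal]
  rw [show (∑ i, (if i ∈ s then (1:ℂ) else 0) * ((hF.eigenvalues i : ℝ) : ℂ))
      = ∑ i, (if i ∈ s then (((hF.eigenvalues i : ℝ)) : ℂ) else 0) from
    Finset.sum_congr rfl fun i _ => by split <;> simp]
  rw [Finset.sum_ite_mem, Finset.univ_inter, ← Complex.ofReal_sum, Complex.ofReal_re]

lemma trace_specProj_mul (hF : F.IsHermitian) (s : Finset (Fin n))
    (X : Matrix (Fin n) (Fin n) ℂ) :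
    Matrix.trace (specProj hF s * X)
      = Matrix.trace (diagonal (fun i => if i ∈ s then (1:ℂ) else 0) *
          ((hF.eigenvectorUnitary : Matrix (Fin n) (Fin n) ℂ)ᴴ * X *
            (hF.eigenvectorUnitary : Matrix (Fin n) (Fin n) ℂ))) := by
  unfold specProj
  set V := (hF.eigenvectorUnitary : Matrix (Fin n) (Fin n) ℂ)
  set E : Matrix (Fin n) (Fin n) ℂ := diagonal (fun i => if i ∈ s then (1:ℂ) else 0)
  rw [show V * E * Vᴴ * X = V * (E * (Vᴴ * X)) by noncomm_ring, Matrix.trace_mul_comm,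
    show E * (Vᴴ * X) * V = E * (Vᴴ * X * V) by noncomm_ring]

lemma trace_indicator_mul (t : Finset (Fin n)) (X : Matrix (Fin n) (Fin n) ℂ) :
    Matrix.trace (diagonal (fun i => if i ∈ t then (1:ℂ) else 0) * X) = ∑ i ∈ t, X i i := by
  rw [Matrix.trace]
  have h : ∀ i, (diagonal (fun i => if i ∈ t then (1:ℂ) else 0) * X).diag i
      = if i ∈ t then X i i else 0 := by
    intro i
    rw [Matrix.diag_apply, Matrix.diagonal_mul]
    split <;> simp
  rw [Finset.sum_congr rfl fun i _ => h i, Finset.sum_ite_mem, Finset.univ_inter]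

end unitaryHelpers

/-! ### Ky Fan maximum principle -/

/-- Ky Fan: the trace of a rank-`r` orthogonal projection against a Hermitian matrix
`W * diagonal g * Wᴴ` is at most the sum of the `r` largest values of `g`. -/
lemma trace_proj_le {n : ℕ} (W : Matrix (Fin n) (Fin n) ℂ) (hW : Wᴴ * W = 1) (hW' : W * Wᴴ = 1)
    (g : Fin n → ℝ) (P : Matrix (Fin n) (Fin n) ℂ) (hP : Pᴴ = P) (hP2 : P * P = P)
    (r : ℕ) (hr : r ≤ n) (htr : P.trace = (r : ℂ)) :
    (Matrix.trace (P * (W * Matrix.diagonal (fun i => (g i : ℂ)) * Wᴴ))).re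
      ≤ ∑ j ∈ Finset.univ.filter (fun j : Fin n => (j:ℕ) < r), descSort g j := by
  set P' := Wᴴ * P * W with hP'def
  have hP'2 : P' * P' = P' := by
    rw [hP'def]
    calc Wᴴ * P * W * (Wᴴ * P * W) = Wᴴ * (P * (W * Wᴴ) * P) * W := by
          noncomm_ring
      _ = Wᴴ * P * W := by rw [hW', mul_one, hP2]
  have hP'H : P'ᴴ = P' := by
    rw [hP'def]
    simp [conjTranspose_mul, hP, Matrix.mul_assoc]
  have htrace : Matrix.trace (P * (W * Matrix.diagonal (fun i => (g i : ℂ)) * Wᴴ))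
      = Matrix.trace (P' * Matrix.diagonal (fun i => (g i : ℂ))) := by
    rw [hP'def]
    rw [show P * (W * Matrix.diagonal (fun i => (g i : ℂ)) * Wᴴ)
        = (P * W * Matrix.diagonal (fun i => (g i : ℂ))) * Wᴴ by noncomm_ring]
    rw [Matrix.trace_mul_comm]
    rw [show Wᴴ * (P * W * Matrix.diagonal (fun i => (g i : ℂ)))
        = (Wᴴ * P * W) * Matrix.diagonal (fun i => (g i : ℂ)) by noncomm_ring]
  set c : Fin n → ℝ := fun i => (P' i i).re with hc
  have hdiag : ∀ i, P' i i = (c i : ℂ) := by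
    intro i
    have : star (P' i i) = P' i i := by
      conv_lhs => rw [← hP'H]
      simp [conjTranspose_apply]
    exact (Complex.conj_eq_iff_re.mp this).symm ▸ by
      simp [hc, (Complex.conj_eq_iff_re.mp this)]
  have hsumsq : ∀ i, P' i i = ∑ k, Complex.normSq (P' i k) := by
    intro i
    conv_lhs => rw [← hP'2]
    rw [Matrix.mul_apply]
    push_cast
    apply Finset.sum_congr rfl
    intro k _
    have hki : P' k i = star (P' i k) := by
      conv_lhs => rw [← hP'H]
      rw [conjTranspose_apply]
    rw [hki, show (star (P' i k)) = (starRingEnd ℂ) (P' i k) from rfl, Complex.mul_conj]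
  have hc0 : ∀ i, 0 ≤ c i := by
    intro i
    have := hsumsq i
    rw [hc]
    simp only []
    rw [this, Complex.ofReal_re]
    exact Finset.sum_nonneg fun k _ => Complex.normSq_nonneg _
  have hc1 : ∀ i, c i ≤ 1 := by
    intro i
    have h1 : Complex.normSq (P' i i) ≤ c i := by
      have := hsumsq i
      have h2 : (c i : ℂ) = ∑ k, (Complex.normSq (P' i k) : ℂ) := by
        rw [← hdiag i, this]; push_cast; rfl
      have h3 : c i = ∑ k, Complex.normSq (P' i k) := by
        exact_mod_cast h2
      rw [h3]
      exact Finset.single_le_sum (f := fun k => Complex.normSq (P' i k))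
        (fun k _ => Complex.normSq_nonneg _) (Finset.mem_univ i)
    have h4 : Complex.normSq (P' i i) = (c i)^2 := by
      rw [hdiag i]; simp [Complex.normSq_ofReal]; ring
    nlinarith [hc0 i]
  have hcs : ∑ i, c i = r := by
    have : Matrix.trace P' = Matrix.trace P := by
      rw [hP'def, Matrix.trace_mul_comm, show W * (Wᴴ * P) = (W * Wᴴ) * P by noncomm_ring,
        hW', one_mul]
    have h5 : Matrix.trace P' = (r : ℂ) := by rw [this, htr]
    have h6 : Matrix.trace P' = ((∑ i, c i : ℝ) : ℂ) := by
      rw [Matrix.trace]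
      push_cast
      exact Finset.sum_congr rfl fun i _ => by rw [Matrix.diag_apply, hdiag i]
    rw [h5] at h6
    exact_mod_cast h6.symm
  have htr2 : (Matrix.trace (P' * Matrix.diagonal (fun i => (g i : ℂ)))).re
      = ∑ i, g i * c i := by
    rw [Matrix.trace]
    rw [Complex.re_sum]
    apply Finset.sum_congr rfl
    intro i _
    rw [Matrix.diag_apply, Matrix.mul_diagonal, hdiag i]
    push_cast
    simp [mul_comm]
  rw [htrace, htr2]
  set σ := Tuple.sort (fun i => -(g i)) with hσ
  have : ∑ i, g i * c i = ∑ i, descSort g i * (c ∘ σ) i := by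
    rw [← Equiv.sum_comp σ (fun i => g i * c i)]
    rfl
  rw [this]
  exact sum_mul_le_partial (descSort g) (c ∘ σ) (antitone_descSort g)
    (fun i => hc0 _) (fun i => hc1 _) r hr
    (by simpa [Function.comp] using (Equiv.sum_comp σ c).trans hcs)

/-! ### The algebraic core -/

set_option maxHeartbeats 1000000 in
/-- The key noncommutative polynomial identity: with `N = D - M`, the Hermitian part of the
binomially-ordered fourth power differs from `D⁴` by explicitly listed words. -/
lemma mainIdentity {n : ℕ} (M D : Matrix (Fin n) (Fin n) ℂ) (hM : Mᴴ = M) (hD : Dᴴ = D) :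
    (M^4 + (4:ℂ)•(M^3*(D-M)) + (6:ℂ)•(M^2*(D-M)^2) + (4:ℂ)•(M*(D-M)^3) + (D-M)^4)
      + ((M^4 + (4:ℂ)•(M^3*(D-M)) + (6:ℂ)•(M^2*(D-M)^2) + (4:ℂ)•(M*(D-M)^3) + (D-M)^4))ᴴ
    = (2:ℂ)•(D^4) + (2:ℂ)•(M*D^3) + (2:ℂ)•(D^3*M) - (2:ℂ)•(D*M*D^2) - (2:ℂ)•(D^2*M*D)
      + (4:ℂ)•(M*M*D^2) + (4:ℂ)•(D^2*(M*M)) + (2:ℂ)•(D*(M*M)*D) - (2:ℂ)•(M*D*M*D)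
      - (2:ℂ)•(D*M*D*M) - (6:ℂ)•(M*D^2*M) := by
  simp only [conjTranspose_add, conjTranspose_smul, conjTranspose_mul, conjTranspose_pow,
    conjTranspose_sub, hM, hD, Complex.star_def, map_ofNat]
  have h4 : (4:ℂ) = ((4:ℕ):ℂ) := by norm_num
  have h6 : (6:ℂ) = ((6:ℕ):ℂ) := by norm_num
  have h2 : (2:ℂ) = ((2:ℕ):ℂ) := by norm_num
  simp only [h4, h6, h2, Nat.cast_smul_eq_nsmul]
  noncomm_ring

/-- Real part of a diagonal entry of the right-hand side of `mainIdentity`. -/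
lemma diag_entry_re {n : ℕ} (d : Fin n → ℝ) (M : Matrix (Fin n) (Fin n) ℂ) (hM : Mᴴ = M)
    (i : Fin n) :
    ((((2:ℂ)•((diagonal (fun j => ((d j:ℝ):ℂ)))^4)
      + (2:ℂ)•(M*(diagonal (fun j => ((d j:ℝ):ℂ)))^3)
      + (2:ℂ)•((diagonal (fun j => ((d j:ℝ):ℂ)))^3*M)
      - (2:ℂ)•((diagonal (fun j => ((d j:ℝ):ℂ)))*M*(diagonal (fun j => ((d j:ℝ):ℂ)))^2)
      - (2:ℂ)•((diagonal (fun j => ((d j:ℝ):ℂ)))^2*M*(diagonal (fun j => ((d j:ℝ):ℂ))))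
      + (4:ℂ)•(M*M*(diagonal (fun j => ((d j:ℝ):ℂ)))^2)
      + (4:ℂ)•((diagonal (fun j => ((d j:ℝ):ℂ)))^2*(M*M))
      + (2:ℂ)•((diagonal (fun j => ((d j:ℝ):ℂ)))*(M*M)*(diagonal (fun j => ((d j:ℝ):ℂ))))
      - (2:ℂ)•(M*(diagonal (fun j => ((d j:ℝ):ℂ)))*M*(diagonal (fun j => ((d j:ℝ):ℂ))))
      - (2:ℂ)•((diagonal (fun j => ((d j:ℝ):ℂ)))*M*(diagonal (fun j => ((d j:ℝ):ℂ)))*M)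
      - (6:ℂ)•(M*(diagonal (fun j => ((d j:ℝ):ℂ)))^2*M)) i i)).re
    = 2*(d i)^4 + ∑ k, Complex.normSq (M i k) * (10*(d i)^2 - 4*(d i * d k) - 6*(d k)^2) := by
  set δ : Fin n → ℂ := fun j => ((d j:ℝ):ℂ) with hδ
  set D : Matrix (Fin n) (Fin n) ℂ := diagonal δ with hD
  have hp : ∀ m : ℕ, D^m = diagonal (fun j => δ j ^ m) := by
    intro m; rw [hD, Matrix.diagonal_pow]; rfl
  set T : Fin n → ℂ := fun k => M i k * M k i with hT
  set S1 : ℂ := ∑ k, T k with hS1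
  set Sd : ℂ := ∑ k, T k * δ k with hSd
  set Sd2 : ℂ := ∑ k, T k * (δ k)^2 with hSd2
  have e0 : (D^4) i i = δ i^4 := by rw [hp 4, Matrix.diagonal_apply_eq]
  have e1 : (M*D^3) i i = M i i * δ i^3 := by rw [hp 3, Matrix.mul_diagonal]
  have e2 : (D^3*M) i i = δ i^3 * M i i := by rw [hp 3, Matrix.diagonal_mul]
  have e3 : (D*M*D^2) i i = δ i * M i i * (δ i)^2 := by
    rw [hp 2, Matrix.mul_diagonal, Matrix.diagonal_mul]
  have e4 : (D^2*M*D) i i = δ i^2 * M i i * δ i := by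
    rw [hp 2, Matrix.mul_diagonal, Matrix.diagonal_mul]
  have eq1 : (M*M*D^2) i i = (δ i)^2 * S1 := by
    rw [hp 2, Matrix.mul_diagonal, Matrix.mul_apply, mul_comm]
  have eq2 : (D^2*(M*M)) i i = (δ i)^2 * S1 := by
    rw [hp 2, Matrix.diagonal_mul, Matrix.mul_apply]
  have eq3 : (D*(M*M)*D) i i = δ i * S1 * δ i := by
    rw [Matrix.mul_diagonal, Matrix.diagonal_mul, Matrix.mul_apply]
  have eq4 : (M*D*M*D) i i = δ i * Sd := by
    rw [Matrix.mul_diagonal, Matrix.mul_apply, mul_comm]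
    congr 1
    rw [hSd]
    apply Finset.sum_congr rfl
    intro k _
    rw [Matrix.mul_diagonal, hT]
    ring
  have eq5 : (D*M*D*M) i i = δ i * Sd := by
    rw [Matrix.mul_apply]
    have : ∀ k, (D*M*D) i k * M k i = δ i * (T k * δ k) := by
      intro k
      rw [Matrix.mul_diagonal, Matrix.diagonal_mul, hT]
      ring
    rw [Finset.sum_congr rfl fun k _ => this k, ← Finset.mul_sum, hSd]
  have eq6 : (M*D^2*M) i i = Sd2 := by
    rw [Matrix.mul_apply, hSd2]
    apply Finset.sum_congr rfl
    intro k _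
    rw [hp 2, Matrix.mul_diagonal, hT]
    ring
  have hg : ∑ k, T k * (10*(δ i)^2 - 4*(δ i*δ k) - 6*(δ k)^2)
      = 10*(δ i)^2*S1 - 4*δ i*Sd - 6*Sd2 := by
    rw [show (fun k => T k * (10*(δ i)^2 - 4*(δ i*δ k) - 6*(δ k)^2))
        = fun k => 10*(δ i)^2*T k - 4*δ i*(T k*δ k) - 6*(T k*(δ k)^2) from
      funext fun k => by ring]
    rw [Finset.sum_sub_distrib, Finset.sum_sub_distrib, ← Finset.mul_sum, ← Finset.mul_sum,
      ← Finset.mul_sum, hS1, hSd, hSd2]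
  have big : (((2:ℂ)•(D^4) + (2:ℂ)•(M*D^3) + (2:ℂ)•(D^3*M) - (2:ℂ)•(D*M*D^2) - (2:ℂ)•(D^2*M*D)
      + (4:ℂ)•(M*M*D^2) + (4:ℂ)•(D^2*(M*M)) + (2:ℂ)•(D*(M*M)*D) - (2:ℂ)•(M*D*M*D)
      - (2:ℂ)•(D*M*D*M) - (6:ℂ)•(M*D^2*M)) i i)
      = 2*(δ i)^4 + ∑ k, T k * (10*(δ i)^2 - 4*(δ i*δ k) - 6*(δ k)^2) := by
    simp only [Matrix.add_apply, Matrix.sub_apply, Matrix.smul_apply, e0, e1, e2, e3, e4,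
      eq1, eq2, eq3, eq4, eq5, eq6, smul_eq_mul, hg]
    ring
  rw [big]
  have hTk : ∀ k, T k = ((Complex.normSq (M i k) : ℝ) : ℂ) := by
    intro k
    have h2 : M k i = star (M i k) := by conv_lhs => rw [← hM, conjTranspose_apply]
    rw [hT]
    show M i k * M k i = _
    rw [h2, show (star (M i k)) = (starRingEnd ℂ) (M i k) from rfl, Complex.mul_conj]
  have hsum : ∑ k, T k * (10*(δ i)^2 - 4*(δ i*δ k) - 6*(δ k)^2)
      = ∑ k, ((Complex.normSq (M i k) * (10*(d i)^2 - 4*(d i * d k) - 6*(d k)^2) : ℝ) : ℂ) := by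
    apply Finset.sum_congr rfl
    intro k _
    rw [hTk k, hδ]
    push_cast
    ring
  rw [hsum, ← Complex.ofReal_sum, hδ]
  show ((2:ℂ)*((((d i):ℝ):ℂ))^4 + _).re = _
  rw [show (2:ℂ)*((((d i):ℝ):ℂ))^4 = (((2*(d i)^4 : ℝ)):ℂ) by push_cast; ring,
    ← Complex.ofReal_add, Complex.ofReal_re]

/-! ### Positivity -/

lemma phi_nonneg (x y : ℝ) (h : y^4 ≤ x^4) : 0 ≤ 10*x^2 - 4*(x*y) - 6*y^2 := by
  nlinarith [sq_nonneg (x-y), sq_nonneg (x+y), sq_nonneg (x^2-y^2), sq_nonneg (x^2+y^2),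
    sq_nonneg x, sq_nonneg y]

lemma core_nonneg {n : ℕ} (d : Fin n → ℝ) (a : Fin n → Fin n → ℝ)
    (ha0 : ∀ i k, 0 ≤ a i k) (hsymm : ∀ i k, a i k = a k i)
    (t : Finset (Fin n)) (htop : ∀ i ∈ t, ∀ k, k ∉ t → (d k)^4 ≤ (d i)^4) :
    0 ≤ ∑ i ∈ t, ∑ k, a i k * (10*(d i)^2 - 4*(d i * d k) - 6*(d k)^2) := by
  have hsplit : ∀ i, (∑ k, a i k * (10*(d i)^2 - 4*(d i * d k) - 6*(d k)^2))
      = (∑ k ∈ t, a i k * (10*(d i)^2 - 4*(d i * d k) - 6*(d k)^2))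
        + ∑ k ∈ Finset.univ.filter (fun k => k ∉ t),
            a i k * (10*(d i)^2 - 4*(d i * d k) - 6*(d k)^2) := by
    intro i
    rw [← Finset.sum_filter_add_sum_filter_not Finset.univ (fun k => k ∈ t)]
    congr 1
    apply Finset.sum_congr _ fun k _ => rfl
    simp
  rw [Finset.sum_congr rfl fun i _ => hsplit i, Finset.sum_add_distrib]
  have h2 : 0 ≤ ∑ i ∈ t, ∑ k ∈ Finset.univ.filter (fun k => k ∉ t),
      a i k * (10*(d i)^2 - 4*(d i * d k) - 6*(d k)^2) := by
    apply Finset.sum_nonneg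
    intro i hi
    apply Finset.sum_nonneg
    intro k hk
    simp only [Finset.mem_filter, Finset.mem_univ, true_and] at hk
    exact mul_nonneg (ha0 i k) (phi_nonneg (d i) (d k) (htop i hi k hk))
  have h1 : 0 ≤ ∑ i ∈ t, ∑ k ∈ t, a i k * (10*(d i)^2 - 4*(d i * d k) - 6*(d k)^2) := by
    set S := ∑ i ∈ t, ∑ k ∈ t, a i k * (10*(d i)^2 - 4*(d i * d k) - 6*(d k)^2) with hS
    have hcomm : S = ∑ i ∈ t, ∑ k ∈ t, a k i * (10*(d k)^2 - 4*(d k * d i) - 6*(d i)^2) := by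
      rw [hS]
      exact Finset.sum_comm
    have hdouble : S + S = ∑ i ∈ t, ∑ k ∈ t, a i k * (4*(d i - d k)^2) := by
      nth_rewrite 2 [hcomm]
      rw [← Finset.sum_add_distrib]
      apply Finset.sum_congr rfl
      intro i _
      rw [← Finset.sum_add_distrib]
      apply Finset.sum_congr rfl
      intro k _
      rw [hsymm k i]
      ring
    have hnn : 0 ≤ ∑ i ∈ t, ∑ k ∈ t, a i k * (4*(d i - d k)^2) := by
      apply Finset.sum_nonneg; intro i _
      apply Finset.sum_nonneg; intro k _
      exact mul_nonneg (ha0 i k) (by positivity)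
    linarith
  linarith

/-! ### Conjugation plumbing -/

section conj
variable {n : ℕ} (V : Matrix (Fin n) (Fin n) ℂ)

lemma conjM (h2 : V * Vᴴ = 1) (X Y : Matrix (Fin n) (Fin n) ℂ) :
    (Vᴴ * X * V) * (Vᴴ * Y * V) = Vᴴ * (X * Y) * V := by
  calc (Vᴴ * X * V) * (Vᴴ * Y * V) = Vᴴ * (X * (V * Vᴴ) * Y) * V := by noncomm_ring
    _ = _ := by rw [h2, mul_one]

lemma conjPow (h1 : Vᴴ * V = 1) (h2 : V * Vᴴ = 1) (X : Matrix (Fin n) (Fin n) ℂ) :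
    ∀ k : ℕ, (Vᴴ * X * V) ^ k = Vᴴ * X ^ k * V := by
  intro k
  induction k with
  | zero => simp only [pow_zero, mul_one]; exact h1.symm
  | succ m ih => rw [pow_succ, pow_succ, ih, conjM V h2]

lemma conjPow' (h1 : Vᴴ * V = 1) (h2 : V * Vᴴ = 1) (X : Matrix (Fin n) (Fin n) ℂ) (k : ℕ) :
    V * X ^ k * Vᴴ = (V * X * Vᴴ) ^ k := by
  have := conjPow Vᴴ (by rw [conjTranspose_conjTranspose]; exact h2)
    (by rw [conjTranspose_conjTranspose]; exact h1) X k
  rw [conjTranspose_conjTranspose] at this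
  exact this.symm

lemma conjCT (X : Matrix (Fin n) (Fin n) ℂ) :
    (Vᴴ * X * V)ᴴ = Vᴴ * Xᴴ * V := by
  rw [conjTranspose_mul, conjTranspose_mul, conjTranspose_conjTranspose, Matrix.mul_assoc]

end conj

/-! ### Main theorem -/

/-- `λ(H⁴) ≺_w λ(Re Q₄)`. -/
theorem eig_fourth_weakly_majorized_by_eig_reQ4 {n : ℕ} (A B : Matrix (Fin n) (Fin n) ℂ)
    (hA : A.IsHermitian) (hB : B.IsHermitian)
    (hH4 : ((A + B) ^ 4).IsHermitian)
    (hR4 : ((1 / 2 : ℂ) •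
        ((A ^ 4 + (4 : ℂ) • (A ^ 3 * B) + (6 : ℂ) • (A ^ 2 * B ^ 2)
            + (4 : ℂ) • (A * B ^ 3) + B ^ 4)
          + (A ^ 4 + (4 : ℂ) • (A ^ 3 * B) + (6 : ℂ) • (A ^ 2 * B ^ 2)
            + (4 : ℂ) • (A * B ^ 3) + B ^ 4)ᴴ)).IsHermitian) :
    ∀ r : ℕ, r ≤ n →
      ∑ j ∈ Finset.univ.filter (fun j : Fin n => (j : ℕ) < r), descSort hH4.eigenvalues j ≤
        ∑ j ∈ Finset.univ.filter (fun j : Fin n => (j : ℕ) < r), descSort hR4.eigenvalues j := by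
  intro r hr
  have hH : (A + B).IsHermitian := hA.add hB
  set V := (hH.eigenvectorUnitary : Matrix (Fin n) (Fin n) ℂ) with hVdef
  have hV1 : Vᴴ * V = 1 := eigU_conjT_mul hH
  have hV2 : V * Vᴴ = 1 := eigU_mul_conjT hH
  set d := hH.eigenvalues with hd
  have hspec : A + B = V * diagonal (fun i => ((d i : ℝ):ℂ)) * Vᴴ := spectral hH
  set Q := A ^ 4 + (4 : ℂ) • (A ^ 3 * B) + (6 : ℂ) • (A ^ 2 * B ^ 2)
            + (4 : ℂ) • (A * B ^ 3) + B ^ 4 with hQdef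
  -- Step 1: the partial sum of `λ(H⁴)` as a trace against a spectral projection
  obtain ⟨s₄, hcard₄, -, hsum₄⟩ := descSort_partial_sum hH4.eigenvalues r hr
  -- Step 2: Ky Fan bound for `H⁴` in the eigenbasis of `H`
  have hH4diag : (A+B)^4 = V * diagonal (fun i => ((d i ^ 4 : ℝ) : ℂ)) * Vᴴ := by
    rw [hspec, ← conjPow' V hV1 hV2, Matrix.diagonal_pow]
    rw [show ((fun i => ((d i:ℝ):ℂ))^4 : Fin n → ℂ) = (fun i => ((d i^4 : ℝ):ℂ)) from
      funext fun i => by simp [Pi.pow_apply]]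
  have hky1 : (Matrix.trace (specProj hH4 s₄ * ((A+B)^4))).re
      ≤ ∑ j ∈ Finset.univ.filter (fun j : Fin n => (j:ℕ) < r), descSort (fun i => d i ^ 4) j := by
    have h := trace_proj_le V hV1 hV2 (fun i => d i ^ 4) (specProj hH4 s₄)
      (specProj_herm hH4 s₄) (specProj_idem hH4 s₄) r hr
      (by simp [specProj_trace hH4 s₄, hcard₄])
    beta_reduce at h
    rwa [← hH4diag] at h
  -- Step 3: pick a top set for `d⁴`
  obtain ⟨t, hcardt, htopt, hsumt⟩ := descSort_partial_sum (fun i => d i ^ 4) r hr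
  -- Step 4: the core inequality
  set R4 := (1 / 2 : ℂ) • (Q + Qᴴ) with hR4def
  have hMH : (Vᴴ*A*V)ᴴ = Vᴴ*A*V := by rw [conjCT, hA.eq]
  have hDdH : (diagonal (fun i => ((d i : ℝ):ℂ)))ᴴ = diagonal (fun i => ((d i : ℝ):ℂ)) := by
    rw [diagonal_conjTranspose]
    apply congrArg diagonal
    funext i
    simp [Pi.star_apply, Complex.star_def, Complex.conj_ofReal]
  have hHd : Vᴴ * (A + B) * V = diagonal (fun i => ((d i : ℝ):ℂ)) := by
    rw [hspec]
    calc Vᴴ * (V * diagonal (fun i => ((d i : ℝ):ℂ)) * Vᴴ) * V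
        = (Vᴴ * V) * diagonal (fun i => ((d i : ℝ):ℂ)) * (Vᴴ * V) := by noncomm_ring
      _ = _ := by rw [hV1]; simp
  have hBconj : Vᴴ * B * V = diagonal (fun i => ((d i : ℝ):ℂ)) - Vᴴ*A*V := by
    have h0 : Vᴴ * B * V = Vᴴ * (A + B) * V - Vᴴ * A * V := by noncomm_ring
    rw [h0, hHd]
  have hQconj : Vᴴ * Q * V
      = (Vᴴ*A*V)^4 + (4:ℂ)•((Vᴴ*A*V)^3*(diagonal (fun i => ((d i : ℝ):ℂ))-(Vᴴ*A*V)))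
        + (6:ℂ)•((Vᴴ*A*V)^2*(diagonal (fun i => ((d i : ℝ):ℂ))-(Vᴴ*A*V))^2)
        + (4:ℂ)•((Vᴴ*A*V)*(diagonal (fun i => ((d i : ℝ):ℂ))-(Vᴴ*A*V))^3)
        + (diagonal (fun i => ((d i : ℝ):ℂ))-(Vᴴ*A*V))^4 := by
    rw [← hBconj, hQdef]
    simp only [Matrix.mul_add, Matrix.add_mul, mul_smul_comm, smul_mul_assoc]
    rw [← conjM V hV2 (A^3) B, ← conjM V hV2 (A^2) (B^2), ← conjM V hV2 A (B^3),
      conjPow V hV1 hV2 A 4, conjPow V hV1 hV2 A 3, conjPow V hV1 hV2 A 2,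
      conjPow V hV1 hV2 B 2, conjPow V hV1 hV2 B 3, conjPow V hV1 hV2 B 4]
  have hcombined : Vᴴ * R4 * V = (1/2:ℂ) • ((Vᴴ*Q*V) + (Vᴴ*Q*V)ᴴ) := by
    rw [hR4def]
    simp only [mul_smul_comm, smul_mul_assoc, Matrix.mul_add, Matrix.add_mul]
    rw [← conjCT V Q]
  have hform : Vᴴ * R4 * V = (1/2:ℂ) •
      ((2:ℂ)•((diagonal (fun j => ((d j:ℝ):ℂ)))^4)
      + (2:ℂ)•((Vᴴ*A*V)*(diagonal (fun j => ((d j:ℝ):ℂ)))^3)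
      + (2:ℂ)•((diagonal (fun j => ((d j:ℝ):ℂ)))^3*(Vᴴ*A*V))
      - (2:ℂ)•((diagonal (fun j => ((d j:ℝ):ℂ)))*(Vᴴ*A*V)*(diagonal (fun j => ((d j:ℝ):ℂ)))^2)
      - (2:ℂ)•((diagonal (fun j => ((d j:ℝ):ℂ)))^2*(Vᴴ*A*V)*(diagonal (fun j => ((d j:ℝ):ℂ))))
      + (4:ℂ)•((Vᴴ*A*V)*(Vᴴ*A*V)*(diagonal (fun j => ((d j:ℝ):ℂ)))^2)
      + (4:ℂ)•((diagonal (fun j => ((d j:ℝ):ℂ)))^2*((Vᴴ*A*V)*(Vᴴ*A*V)))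
      + (2:ℂ)•((diagonal (fun j => ((d j:ℝ):ℂ)))*((Vᴴ*A*V)*(Vᴴ*A*V))*(diagonal (fun j => ((d j:ℝ):ℂ))))
      - (2:ℂ)•((Vᴴ*A*V)*(diagonal (fun j => ((d j:ℝ):ℂ)))*(Vᴴ*A*V)*(diagonal (fun j => ((d j:ℝ):ℂ))))
      - (2:ℂ)•((diagonal (fun j => ((d j:ℝ):ℂ)))*(Vᴴ*A*V)*(diagonal (fun j => ((d j:ℝ):ℂ)))*(Vᴴ*A*V))
      - (6:ℂ)•((Vᴴ*A*V)*(diagonal (fun j => ((d j:ℝ):ℂ)))^2*(Vᴴ*A*V))) := by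
    rw [hcombined, hQconj, mainIdentity (Vᴴ*A*V) (diagonal (fun i => ((d i : ℝ):ℂ))) hMH hDdH]
  have hcore : ∑ i ∈ t, (d i)^4 ≤ (Matrix.trace (specProj hH t * R4)).re := by
    rw [trace_specProj_mul hH t R4, ← hVdef, hform, trace_indicator_mul]
    have hre : (∑ i ∈ t, ((1/2:ℂ) • ((2:ℂ)•((diagonal (fun j => ((d j:ℝ):ℂ)))^4)
        + (2:ℂ)•((Vᴴ*A*V)*(diagonal (fun j => ((d j:ℝ):ℂ)))^3)
        + (2:ℂ)•((diagonal (fun j => ((d j:ℝ):ℂ)))^3*(Vᴴ*A*V))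
        - (2:ℂ)•((diagonal (fun j => ((d j:ℝ):ℂ)))*(Vᴴ*A*V)*(diagonal (fun j => ((d j:ℝ):ℂ)))^2)
        - (2:ℂ)•((diagonal (fun j => ((d j:ℝ):ℂ)))^2*(Vᴴ*A*V)*(diagonal (fun j => ((d j:ℝ):ℂ))))
        + (4:ℂ)•((Vᴴ*A*V)*(Vᴴ*A*V)*(diagonal (fun j => ((d j:ℝ):ℂ)))^2)
        + (4:ℂ)•((diagonal (fun j => ((d j:ℝ):ℂ)))^2*((Vᴴ*A*V)*(Vᴴ*A*V)))
        + (2:ℂ)•((diagonal (fun j => ((d j:ℝ):ℂ)))*((Vᴴ*A*V)*(Vᴴ*A*V))*(diagonal (fun j => ((d j:ℝ):ℂ))))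
        - (2:ℂ)•((Vᴴ*A*V)*(diagonal (fun j => ((d j:ℝ):ℂ)))*(Vᴴ*A*V)*(diagonal (fun j => ((d j:ℝ):ℂ))))
        - (2:ℂ)•((diagonal (fun j => ((d j:ℝ):ℂ)))*(Vᴴ*A*V)*(diagonal (fun j => ((d j:ℝ):ℂ)))*(Vᴴ*A*V))
        - (6:ℂ)•((Vᴴ*A*V)*(diagonal (fun j => ((d j:ℝ):ℂ)))^2*(Vᴴ*A*V)))) i i).re
        = ∑ i ∈ t, (1/2:ℝ) * (2*(d i)^4
            + ∑ k, Complex.normSq ((Vᴴ*A*V) i k) * (10*(d i)^2 - 4*(d i * d k) - 6*(d k)^2)) := by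
      rw [Complex.re_sum]
      apply Finset.sum_congr rfl
      intro i _
      rw [Matrix.smul_apply, smul_eq_mul,
        show ((1:ℂ)/2) = (((1/2 : ℝ)):ℂ) by norm_num, Complex.re_ofReal_mul,
        diag_entry_re d (Vᴴ*A*V) hMH i]
    rw [hre]
    have hpos : 0 ≤ ∑ i ∈ t, ∑ k, Complex.normSq ((Vᴴ*A*V) i k)
        * (10*(d i)^2 - 4*(d i * d k) - 6*(d k)^2) := by
      apply core_nonneg d (fun i k => Complex.normSq ((Vᴴ*A*V) i k))
        (fun i k => Complex.normSq_nonneg _) ?_ t htopt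
      intro i k
      have hik : (Vᴴ*A*V) k i = star ((Vᴴ*A*V) i k) := by
        conv_lhs => rw [← hMH, conjTranspose_apply]
      show Complex.normSq ((Vᴴ*A*V) i k) = Complex.normSq ((Vᴴ*A*V) k i)
      rw [hik]
      exact (Complex.normSq_conj _).symm
    have hexp : ∑ i ∈ t, (1/2:ℝ) * (2*(d i)^4
          + ∑ k, Complex.normSq ((Vᴴ*A*V) i k) * (10*(d i)^2 - 4*(d i * d k) - 6*(d k)^2))
        = (∑ i ∈ t, (d i)^4) + (1/2:ℝ) * ∑ i ∈ t, ∑ k, Complex.normSq ((Vᴴ*A*V) i k)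
            * (10*(d i)^2 - 4*(d i * d k) - 6*(d k)^2) := by
      rw [Finset.mul_sum, ← Finset.sum_add_distrib]
      apply Finset.sum_congr rfl
      intro i _
      ring
    rw [hexp]
    linarith
  -- Step 5: Ky Fan bound for `Re Q₄`
  have hky2 : (Matrix.trace (specProj hH t * R4)).re
      ≤ ∑ j ∈ Finset.univ.filter (fun j : Fin n => (j:ℕ) < r), descSort hR4.eigenvalues j := by
    have hspecR := spectral hR4
    have := trace_proj_le (hR4.eigenvectorUnitary : Matrix (Fin n) (Fin n) ℂ)
      (eigU_conjT_mul hR4) (eigU_mul_conjT hR4) hR4.eigenvalues (specProj hH t)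
      (specProj_herm hH t) (specProj_idem hH t) r hr
      (by rw [specProj_trace hH t, hcardt])
    rwa [← hspecR] at this
  calc ∑ j ∈ Finset.univ.filter (fun j : Fin n => (j : ℕ) < r), descSort hH4.eigenvalues j
      = ∑ i ∈ s₄, hH4.eigenvalues i := hsum₄
    _ = (Matrix.trace (specProj hH4 s₄ * ((A+B)^4))).re := (trace_specProj_self hH4 s₄).symm
    _ ≤ ∑ j ∈ Finset.univ.filter (fun j : Fin n => (j:ℕ) < r), descSort (fun i => d i ^ 4) j :=
        hky1
    _ = ∑ i ∈ t, (d i)^4 := hsumt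
    _ ≤ (Matrix.trace (specProj hH t * R4)).re := hcore
    _ ≤ _ := hky2
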